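/- The class of APC languages is not closed under complementation, and level 3/2 of the Straubing-Thérien hierarchy is not closed under commutative closure of complements: over Sigma = {a,b}, the complement of Sigma^* aa Sigma^* ∪ Sigma^* bb Sigma^* ∪ b Sigma^* ∪ Sigma^* a equals (ab)^*, and perm((ab)^*) = { u : |u|_a = |u|_b } is not regular. -/

import Mathlib

open List

/-- Commutative (permutation) closure of a language. -/
def permCl {α : Type} (L : Language α) : Language α := {w | ∃ v ∈ L, w.Perm v}

/-- A path in an NFA from a state to a state, labeled by a word, visiting the given
list of states. -/
inductive NPath {α σ : Type} (M : NFA α σ) : σ → List α → σ → List σ → Prop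
  | nil (q : σ) : NPath M q [] q [q]
  | cons {q q' p : σ} {a : α} {w : List α} {qs : List σ} :
      q' ∈ M.step q a → NPath M q' w p qs → NPath M q (a :: w) p (q :: qs)

/-- The set of words labeling simple accepting paths (no repeated state). -/
def Lsimple {α σ : Type} (M : NFA α σ) : Language α :=
  {w | ∃ s ∈ M.start, ∃ f ∈ M.accept, ∃ qs, NPath M s w f qs ∧ qs.Nodup}

/-- Reachability between states of an NFA. -/
def Reach {α σ : Type} (M : NFA α σ) (p q : σ) : Prop := ∃ w : List α, q ∈ M.evalFrom {p} w

/-- A partially ordered (weakly acyclic) NFA: reachability is antisymmetric,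
equivalently the only loops are self-loops. -/
def PartiallyOrdered {α σ : Type} (M : NFA α σ) : Prop :=
  ∀ p q, Reach M p q → Reach M q p → p = q

/-- A partial deterministic finite automaton viewed as an NFA. -/
def IsPDFA {α σ : Type} (M : NFA α σ) : Prop :=
  M.start.Subsingleton ∧ ∀ q a, (M.step q a).Subsingleton

/-- `L` is recognized by a deterministic finite automaton with at most `N` states. -/
def RecognizableWithin {α : Type} (L : Language α) (N : ℕ) : Prop :=
  ∃ (σ : Type) (_ : Fintype σ) (D : DFA α σ), Fintype.card σ ≤ N ∧ D.accepts = L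

/-- `IsShuffle u v w` : `w` is an interleaving of `u` and `v`. -/
inductive IsShuffle {α : Type} : List α → List α → List α → Prop
  | nil : IsShuffle [] [] []
  | left {u v w : List α} {a : α} : IsShuffle u v w → IsShuffle (a :: u) v (a :: w)
  | right {u v w : List α} {a : α} : IsShuffle u v w → IsShuffle u (a :: v) (a :: w)

/-- Shuffle of two languages. -/
def lshuffle {α : Type} (U V : Language α) : Language α :=
  {w | ∃ u ∈ U, ∃ v ∈ V, IsShuffle u v w}

/-- Iterated shuffle of a list of languages. -/
def shuffleList {α : Type} : List (Language α) → Language α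
  | [] => {[]}
  | L :: Ls => lshuffle L (shuffleList Ls)

/-- Unary projection of a language onto the letter `a`. -/
def proj {α : Type} [DecidableEq α] (a : α) (L : Language α) : Language α :=
  (fun u => List.replicate (u.count a) a) '' L

/-- A strict shuffle language: it equals the shuffle of its unary projections over
the whole alphabet. -/
def IsStrictShuffle {α : Type} [Fintype α] [DecidableEq α] (L : Language α) : Prop :=
  L = shuffleList ((Finset.univ : Finset α).toList.map (fun a => proj a L))

/-- `Γ^*` : all words over the subalphabet `Γ`. -/
def subStar {α : Type} (Γ : Set α) : Language α := {w | ∀ x ∈ w, x ∈ Γ}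

/-- The APC atom `Σ₀^* a₁ Σ₁^* ⋯ aₙ Σₙ^*`, given by the initial subalphabet and the
list of pairs `(aᵢ, Σᵢ)`. -/
def apcAtom {α : Type} (Γ0 : Set α) : List (α × Set α) → Language α
  | [] => subStar Γ0
  | (a, Γ) :: rest => subStar Γ0 * (({[a]} : Language α) * apcAtom Γ rest)

/-- An Alphabetical Pattern Constraint language: a finite union of APC atoms. -/
def IsAPC {α : Type} (L : Language α) : Prop :=
  ∃ parts : List (Set α × List (α × Set α)),
    L = {w | ∃ p ∈ parts, w ∈ apcAtom p.1 p.2}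


inductive TF : List Bool → Prop
  | nil : TF []
  | cons {w : List Bool} : TF w → TF (true :: false :: w)

lemma mem_tfstar {w : List Bool} :
    w ∈ KStar.kstar ({[true, false]} : Language Bool) ↔ TF w := by
  rw [Language.mem_kstar]
  constructor
  · rintro ⟨S, rfl, hS⟩
    induction S with
    | nil => exact TF.nil
    | cons y S ih =>
        have hy : y = [true, false] := hS y (by simp)
        subst hy
        exact TF.cons (ih fun z hz => hS z (by simp [hz]))
  · intro h
    induction h with
    | nil => exact ⟨[], rfl, by simp⟩
    | cons _ ih =>
        obtain ⟨S, hS, hm⟩ := ih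
        refine ⟨[true, false] :: S, by simp [hS], ?_⟩
        intro y hy
        rw [List.mem_cons] at hy
        rcases hy with rfl | hy
        · rfl
        · exact hm y hy

lemma tf_shape {w : List Bool} (h : TF w) : w = [] ∨ ∃ w', w = true :: false :: w' ∧ TF w' := by
  cases h with
  | nil => exact Or.inl rfl
  | cons h => exact Or.inr ⟨_, rfl, h⟩

lemma tf_no_dup {w : List Bool} (h : TF w) (c : Bool) : ¬ [c, c] <:+: w := by
  induction h with
  | nil => rintro ⟨s, t, hs⟩; simpa using congrArg List.length hs
  | cons h ih =>
      rintro ⟨s, t, hs⟩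
      match s, hs with
      | [], hs =>
          simp only [List.nil_append, List.cons_append, List.cons.injEq] at hs
          obtain ⟨h1, h2, _⟩ := hs; subst h1; exact Bool.noConfusion h2
      | [x], hs =>
          simp only [List.cons_append, List.nil_append, List.cons.injEq] at hs
          obtain ⟨_, h2, h3⟩ := hs; subst h2
          rcases tf_shape h with h4 | ⟨w', h4, _⟩ <;> rw [← h3] at h4 <;> simp at h4
      | x :: y :: s, hs =>
          simp only [List.cons_append, List.cons.injEq] at hs
          exact ih ⟨s, t, hs.2.2⟩

lemma tf_no_last {w : List Bool} (h : TF w) : ¬ ∃ t, w = t ++ [true] := by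
  induction h with
  | nil => rintro ⟨t, ht⟩; simpa using congrArg List.length ht
  | cons h ih =>
      rintro ⟨t, ht⟩
      match t, ht with
      | [], ht => simp at ht
      | [x], ht => simp at ht
      | x :: y :: t, ht =>
          simp only [List.cons_append, List.cons.injEq] at ht
          exact ih ⟨t, ht.2.2⟩

lemma tf_no_head {w : List Bool} (h : TF w) : ¬ ∃ t, w = false :: t := by
  rcases tf_shape h with h | ⟨w', h, _⟩ <;> subst h <;> rintro ⟨t, ht⟩ <;> simp at ht

lemma tf_of_avoid : ∀ (n : ℕ) (w : List Bool), w.length ≤ n →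
    (¬ [true, true] <:+: w) → (¬ [false, false] <:+: w) →
    (¬ ∃ t, w = false :: t) → (¬ ∃ t, w = t ++ [true]) → TF w := by
  intro n
  induction n with
  | zero => intro w hw _ _ _ _; rw [List.length_eq_zero_iff.mp (Nat.le_zero.mp hw)]; exact TF.nil
  | succ n ih =>
      intro w hw h1 h2 h3 h4
      match w with
      | [] => exact TF.nil
      | [x] =>
          cases x
          · exact absurd ⟨[], rfl⟩ h3
          · exact absurd ⟨[], rfl⟩ h4
      | x :: y :: w =>
          cases x
          · exact absurd ⟨y :: w, rfl⟩ h3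
          · cases y
            · refine TF.cons (ih w ?_ ?_ ?_ ?_ ?_)
              · simp only [List.length_cons] at hw ⊢; omega
              · exact fun h => h1 (List.infix_cons (List.infix_cons h))
              · exact fun h => h2 (List.infix_cons (List.infix_cons h))
              · rintro ⟨t, rfl⟩; exact h2 ⟨[true], t, rfl⟩
              · rintro ⟨t, rfl⟩; exact h4 ⟨true :: false :: t, rfl⟩
            · exact absurd ⟨[], w, rfl⟩ h1

lemma mem_apcAtom_cons {Γ0 : Set Bool} {a : Bool} {Γ : Set Bool} {rest : List (Bool × Set Bool)}
    {w : List Bool} :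
    w ∈ apcAtom Γ0 ((a, Γ) :: rest) ↔
      ∃ u v, u ∈ subStar Γ0 ∧ v ∈ apcAtom Γ rest ∧ w = u ++ a :: v := by
  show w ∈ subStar Γ0 * (({[a]} : Language Bool) * apcAtom Γ rest) ↔ _
  rw [Language.mem_mul]
  constructor
  · rintro ⟨u, hu, b, hb, rfl⟩
    rw [Language.mem_mul] at hb
    obtain ⟨s, hs, v, hv, rfl⟩ := hb
    change s = [a] at hs
    subst hs
    exact ⟨u, v, hu, hv, rfl⟩
  · rintro ⟨u, v, hu, hv, rfl⟩
    refine ⟨u, hu, a :: v, ?_, rfl⟩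
    rw [Language.mem_mul]
    exact ⟨[a], rfl, v, hv, rfl⟩

lemma subStar_univ (w : List Bool) : w ∈ subStar (Set.univ : Set Bool) := fun _ _ => trivial

lemma subStar_empty {w : List Bool} (h : w ∈ subStar (∅ : Set Bool)) : w = [] := by
  cases w with
  | nil => rfl
  | cons a w => exact absurd (h a List.mem_cons_self) (Set.notMem_empty a)

lemma atom_dup (c : Bool) (w : List Bool) :
    w ∈ apcAtom Set.univ [(c, (∅ : Set Bool)), (c, Set.univ)] ↔ [c, c] <:+: w := by
  constructor
  · rw [mem_apcAtom_cons]
    rintro ⟨u, v, _, hv, rfl⟩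
    rw [mem_apcAtom_cons] at hv
    obtain ⟨u', v', hu', _, rfl⟩ := hv
    rw [subStar_empty hu']
    exact ⟨u, v', by simp⟩
  · rintro ⟨s, t, rfl⟩
    rw [mem_apcAtom_cons]
    refine ⟨s, c :: t, subStar_univ s, ?_, by simp⟩
    rw [mem_apcAtom_cons]
    exact ⟨[], t, by intro x hx; simp at hx, subStar_univ t, rfl⟩

lemma atom_head (w : List Bool) :
    w ∈ apcAtom (∅ : Set Bool) [(false, Set.univ)] ↔ ∃ t, w = false :: t := by
  rw [mem_apcAtom_cons]
  constructor
  · rintro ⟨u, v, hu, _, rfl⟩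
    rw [subStar_empty hu]
    exact ⟨v, rfl⟩
  · rintro ⟨t, rfl⟩
    exact ⟨[], t, by intro x hx; simp at hx, subStar_univ t, rfl⟩

lemma atom_last (w : List Bool) :
    w ∈ apcAtom Set.univ [(true, (∅ : Set Bool))] ↔ ∃ t, w = t ++ [true] := by
  rw [mem_apcAtom_cons]
  constructor
  · rintro ⟨u, v, _, hv, rfl⟩
    rw [subStar_empty hv]
    exact ⟨u, rfl⟩
  · rintro ⟨t, rfl⟩
    exact ⟨t, [], subStar_univ t, by intro x hx; simp at hx, rfl⟩

lemma apc_pump : ∀ (l : List (Bool × Set Bool)) (Γ0 : Set Bool) (w : List Bool),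
    w ∈ apcAtom Γ0 l → l.length < w.length →
    ∃ x c y, w = x ++ c :: y ∧ x ++ c :: c :: y ∈ apcAtom Γ0 l := by
  intro l
  induction l with
  | nil =>
      intro Γ0 w hw hl
      match w, hl with
      | c :: y, _ =>
        refine ⟨[], c, y, rfl, ?_⟩
        intro x hx
        rcases List.mem_cons.mp hx with rfl | hx
        · exact hw x List.mem_cons_self
        · exact hw x hx
  | cons p rest ih =>
      obtain ⟨a, Γ⟩ := p
      intro Γ0 w hw hl
      rw [mem_apcAtom_cons] at hw
      obtain ⟨u, v, hu, hv, rfl⟩ := hw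
      match u, hu with
      | c :: u', hu =>
        refine ⟨[], c, u' ++ a :: v, rfl, ?_⟩
        rw [mem_apcAtom_cons]
        refine ⟨c :: c :: u', v, ?_, hv, rfl⟩
        intro x hx
        rcases List.mem_cons.mp hx with rfl | hx
        · exact hu x List.mem_cons_self
        · exact hu x hx
      | [], _ =>
        have hlen : rest.length < v.length := by
          simp only [List.length_cons, List.nil_append] at hl ⊢
          omega
        obtain ⟨x, c, y, rfl, hp⟩ := ih Γ v hv hlen
        refine ⟨a :: x, c, y, by simp, ?_⟩
        rw [mem_apcAtom_cons]
        exact ⟨[], x ++ c :: c :: y, by intro z hz; simp at hz, hp, rfl⟩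

/-- The word `(ab)^n`. -/
def awn : ℕ → List Bool
  | 0 => []
  | n + 1 => true :: false :: awn n

lemma tf_awn (n : ℕ) : TF (awn n) := by
  induction n with
  | zero => exact TF.nil
  | succ n ih => exact TF.cons ih

lemma awn_length (n : ℕ) : (awn n).length = 2 * n := by
  induction n with
  | zero => rfl
  | succ n ih => simp [awn, ih]; omega

lemma awn_count (n : ℕ) (c : Bool) : (awn n).count c = n := by
  induction n with
  | zero => rfl
  | succ n ih => cases c <;> simp [awn, List.count_cons, ih]

lemma tf_count {w : List Bool} (h : TF w) : w.count true = w.count false := by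
  induction h with
  | nil => rfl
  | cons _ ih => simp [List.count_cons, ih]

/-- APCs are not closed under complement: over `Σ = {a, b}` (here
`a = true`, `b = false`), the complement of
`Σ*aaΣ* ∪ Σ*bbΣ* ∪ bΣ* ∪ Σ*a` is `(ab)*`, and `perm((ab)*) = {u : |u|_a = |u|_b}`
is not regular. -/
theorem stmt11 :
    (∃ L : Language Bool, IsAPC L ∧ ¬ IsAPC (Lᶜ : Set (List Bool)))
    ∧ (({w : List Bool | [true, true] <:+: w} ∪ {w | [false, false] <:+: w}
          ∪ {w | ∃ t, w = false :: t} ∪ {w | ∃ t, w = t ++ [true]})ᶜ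
        = KStar.kstar ({[true, false]} : Language Bool))
    ∧ permCl (KStar.kstar ({[true, false]} : Language Bool))
        = {u : List Bool | u.count true = u.count false}
    ∧ ¬ ∃ (τ : Type) (_ : Fintype τ) (D : DFA Bool τ),
        D.accepts = {u : List Bool | u.count true = u.count false} := by
  have key : (({w : List Bool | [true, true] <:+: w} ∪ {w | [false, false] <:+: w}
          ∪ {w | ∃ t, w = false :: t} ∪ {w | ∃ t, w = t ++ [true]})ᶜ
        = KStar.kstar ({[true, false]} : Language Bool)) := by
    ext w
    simp only [Set.mem_compl_iff, Set.mem_union, Set.mem_setOf_eq]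
    constructor
    · intro h
      push_neg at h
      exact mem_tfstar.mpr (tf_of_avoid w.length w le_rfl h.1.1.1 h.1.1.2 (not_exists.mpr h.1.2) (not_exists.mpr h.2))
    · intro h
      have htf := mem_tfstar.mp h
      push_neg
      exact ⟨⟨⟨tf_no_dup htf true, tf_no_dup htf false⟩, not_exists.mp (tf_no_head htf)⟩, not_exists.mp (tf_no_last htf)⟩
  have notapc : ¬ IsAPC (KStar.kstar ({[true, false]} : Language Bool)) := by
    rintro ⟨parts, hp⟩
    set n := (parts.map (fun p => p.2.length)).sum with hn
    have hw : awn (n + 1) ∈ KStar.kstar ({[true, false]} : Language Bool) :=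
      mem_tfstar.mpr (tf_awn _)
    rw [hp] at hw
    obtain ⟨p, hpmem, hpw⟩ := hw
    have hle : p.2.length ≤ n :=
      List.single_le_sum (fun x _ => Nat.zero_le x) _ (List.mem_map_of_mem hpmem)
    have hlt : p.2.length < (awn (n + 1)).length := by rw [awn_length]; omega
    obtain ⟨x, c, y, heq, hpump⟩ := apc_pump p.2 p.1 _ hpw hlt
    have hmem : x ++ c :: c :: y ∈ KStar.kstar ({[true, false]} : Language Bool) := by
      rw [hp]; exact ⟨p, hpmem, hpump⟩
    exact tf_no_dup (mem_tfstar.mp hmem) c ⟨x, y, by simp⟩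
  refine ⟨⟨(({w : List Bool | [true, true] <:+: w} ∪ {w | [false, false] <:+: w}
          ∪ {w | ∃ t, w = false :: t} ∪ {w | ∃ t, w = t ++ [true]}) : Set (List Bool)), ?_, ?_⟩,
          key, ?_, ?_⟩
  · -- IsAPC of the union
    refine ⟨[(Set.univ, [(true, (∅ : Set Bool)), (true, Set.univ)]),
             (Set.univ, [(false, (∅ : Set Bool)), (false, Set.univ)]),
             ((∅ : Set Bool), [(false, Set.univ)]),
             (Set.univ, [(true, (∅ : Set Bool))])], ?_⟩
    ext w
    simp only [Set.mem_union, Set.mem_setOf_eq, List.mem_cons, List.not_mem_nil, or_false]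
    constructor
    · rintro (((h | h) | h) | h)
      · exact ⟨_, Or.inl rfl, (atom_dup true w).mpr h⟩
      · exact ⟨_, Or.inr (Or.inl rfl), (atom_dup false w).mpr h⟩
      · exact ⟨_, Or.inr (Or.inr (Or.inl rfl)), (atom_head w).mpr h⟩
      · exact ⟨_, Or.inr (Or.inr (Or.inr rfl)), (atom_last w).mpr h⟩
    · rintro ⟨p, (rfl | rfl | rfl | rfl), hw⟩
      · exact Or.inl (Or.inl (Or.inl ((atom_dup true w).mp hw)))
      · exact Or.inl (Or.inl (Or.inr ((atom_dup false w).mp hw)))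
      · exact Or.inl (Or.inr ((atom_head w).mp hw))
      · exact Or.inr ((atom_last w).mp hw)
  · -- complement not APC
    rw [key]
    exact notapc
  · -- permCl
    ext u
    simp only [permCl, Set.mem_setOf_eq]
    constructor
    · rintro ⟨v, hv, hperm⟩
      have hc := tf_count (mem_tfstar.mp hv)
      show u.count true = u.count false
      rw [hperm.count_eq true, hperm.count_eq false, hc]
    · intro h
      replace h : u.count true = u.count false := h
      refine ⟨awn (u.count true), mem_tfstar.mpr (tf_awn _), ?_⟩
      rw [List.perm_iff_count]
      intro a
      cases a
      · rw [awn_count]; exact h.symm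
      · rw [awn_count]
  · -- non-regularity
    rintro ⟨τ, _, D, hD⟩
    obtain ⟨m, n, hmn, he⟩ := Finite.exists_ne_map_eq_of_infinite
      (fun k : ℕ => D.evalFrom D.start (List.replicate k true))
    have h1 : List.replicate m true ++ List.replicate m false ∈ D.accepts := by
      rw [hD]
      show (List.replicate m true ++ List.replicate m false).count true
        = (List.replicate m true ++ List.replicate m false).count false
      simp [List.count_append, List.count_replicate]
    rw [DFA.mem_accepts] at h1
    have heval : D.eval (List.replicate n true ++ List.replicate m false)
        = D.eval (List.replicate m true ++ List.replicate m false) := by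
      show D.evalFrom _ _ = D.evalFrom _ _
      rw [DFA.evalFrom_of_append, DFA.evalFrom_of_append, he]
    have h2 : List.replicate n true ++ List.replicate m false ∈ D.accepts := by
      rw [DFA.mem_accepts, heval]
      exact h1
    rw [hD] at h2
    have h3 : (List.replicate n true ++ List.replicate m false).count true
        = (List.replicate n true ++ List.replicate m false).count false := h2
    simp [List.count_append, List.count_replicate] at h3
    exact hmn h3.symm
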